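/- Let β, κ ∈ ℝ and let f : ℝ → ℝ be the map f(x) = β + x − κ/(1 + e^x). Then its derivative f'(x) = 1 + κe^x/(1 + e^x)² satisfies the Lipschitz estimate |f'(x) − f'(y)| ≤ (√3/18)·|κ|·|x − y| for all x, y ∈ ℝ. -/

import Mathlib

lemma pp_key (t : ℝ) (ht : 0 < t) :
    |t * (1 - t)| ≤ Real.sqrt 3 / 18 * (1 + t) ^ 3 := by
  set s := Real.sqrt 3 with hsdef
  have hs : s ^ 2 = 3 := Real.sq_sqrt (by norm_num)
  have hs0 : 0 ≤ s := Real.sqrt_nonneg 3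
  have hs7 : 4 * s ≤ 7 := by nlinarith
  rcases le_total t 1 with h | h
  · rw [abs_of_nonneg (by nlinarith)]
    have id1 : s * (1 + t) ^ 3 - 18 * (t * (1 - t)) = s * (t - 2 + s) ^ 2 * (t + 7 + 4 * s) := by
      linear_combination (-6 * t ^ 2 + 6 * t - 9 * s * t + 9 * s - 4 * s ^ 2) * hs
    have pos := mul_nonneg (mul_nonneg hs0 (sq_nonneg (t - 2 + s)))
      (show (0:ℝ) ≤ t + 7 + 4 * s by nlinarith)
    nlinarith [id1, pos]
  · rw [abs_of_nonpos (by nlinarith)]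
    have id2 : s * (1 + t) ^ 3 + 18 * (t * (1 - t)) = s * (t - 2 - s) ^ 2 * (t + 7 - 4 * s) := by
      linear_combination (6 * t ^ 2 - 6 * t - 9 * s * t + 9 * s + 4 * s ^ 2) * hs
    have pos := mul_nonneg (mul_nonneg hs0 (sq_nonneg (t - 2 - s)))
      (show (0:ℝ) ≤ t + 7 - 4 * s by nlinarith)
    nlinarith [id2, pos]

lemma pp_g_deriv (x : ℝ) :
    HasDerivAt (fun x => Real.exp x / (1 + Real.exp x) ^ 2)
      (Real.exp x * (1 - Real.exp x) / (1 + Real.exp x) ^ 3) x := by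
  have hpos : (0:ℝ) < 1 + Real.exp x := by positivity
  have hne : (1 + Real.exp x) ≠ 0 := ne_of_gt hpos
  have h1 : HasDerivAt (fun x => 1 + Real.exp x) (Real.exp x) x :=
    (Real.hasDerivAt_exp x).const_add 1
  have h2 : HasDerivAt (fun x => (1 + Real.exp x) ^ 2)
      (2 * (1 + Real.exp x) ^ 1 * Real.exp x) x := h1.pow 2
  have h3 := (Real.hasDerivAt_exp x).div h2 (by positivity)
  refine h3.congr_deriv ?_
  field_simp
  ring

lemma pp_g_lip (x y : ℝ) :
    |Real.exp x / (1 + Real.exp x) ^ 2 - Real.exp y / (1 + Real.exp y) ^ 2| ≤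
      Real.sqrt 3 / 18 * |x - y| := by
  have bound : ∀ z : ℝ, ‖Real.exp z * (1 - Real.exp z) / (1 + Real.exp z) ^ 3‖ ≤
      Real.sqrt 3 / 18 := by
    intro z
    have hpos : (0:ℝ) < 1 + Real.exp z := by positivity
    rw [Real.norm_eq_abs, abs_div, abs_of_pos (by positivity : (0:ℝ) < (1 + Real.exp z)^3),
      div_le_iff₀ (by positivity)]
    calc |Real.exp z * (1 - Real.exp z)| ≤ Real.sqrt 3 / 18 * (1 + Real.exp z) ^ 3 :=
          pp_key _ (Real.exp_pos z)
    _ = _ := by ring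
  have := Convex.norm_image_sub_le_of_norm_hasDerivWithin_le
    (f := fun x => Real.exp x / (1 + Real.exp x) ^ 2)
    (f' := fun z => Real.exp z * (1 - Real.exp z) / (1 + Real.exp z) ^ 3)
    (s := Set.univ)
    (fun z _ => (pp_g_deriv z).hasDerivWithinAt) (fun z _ => bound z)
    convex_univ (Set.mem_univ y) (Set.mem_univ x)
  simpa [Real.norm_eq_abs] using this

/-- The derivative of the predator-prey map `f(x) = β + x - κ/(1 + eˣ)` is
`f'(x) = 1 + κeˣ/(1 + eˣ)²`, and it is Lipschitz with constant `(√3/18)·|κ|`. -/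
theorem predator_prey_derivative_lipschitz
    (β κ : ℝ) (f : ℝ → ℝ) (hf : ∀ x, f x = β + x - κ / (1 + Real.exp x)) :
    (∀ x, deriv f x = 1 + κ * Real.exp x / (1 + Real.exp x) ^ 2) ∧
    ∀ x y : ℝ, |deriv f x - deriv f y| ≤ Real.sqrt 3 / 18 * |κ| * |x - y| := by
  have hfe : f = fun x => β + x - κ / (1 + Real.exp x) := funext hf
  have hd : ∀ x, deriv f x = 1 + κ * Real.exp x / (1 + Real.exp x) ^ 2 := by
    intro x
    have hne : (1 + Real.exp x) ≠ 0 := by positivity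
    have h1 : HasDerivAt (fun x => 1 + Real.exp x) (Real.exp x) x :=
      (Real.hasDerivAt_exp x).const_add 1
    have h2 := (hasDerivAt_const x κ).div h1 hne
    have h3 := (((hasDerivAt_id x).const_add β).sub h2)
    have h4 : HasDerivAt f (1 + κ * Real.exp x / (1 + Real.exp x) ^ 2) x := by
      rw [hfe]
      refine h3.congr_deriv ?_
      field_simp
      ring
    exact h4.deriv
  refine ⟨hd, fun x y => ?_⟩
  rw [hd x, hd y]
  have : (1 + κ * Real.exp x / (1 + Real.exp x) ^ 2) -
      (1 + κ * Real.exp y / (1 + Real.exp y) ^ 2) =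
      κ * (Real.exp x / (1 + Real.exp x) ^ 2 - Real.exp y / (1 + Real.exp y) ^ 2) := by ring
  rw [this, abs_mul]
  calc |κ| * |Real.exp x / (1 + Real.exp x) ^ 2 - Real.exp y / (1 + Real.exp y) ^ 2|
      ≤ |κ| * (Real.sqrt 3 / 18 * |x - y|) :=
        mul_le_mul_of_nonneg_left (pp_g_lip x y) (abs_nonneg κ)
    _ = Real.sqrt 3 / 18 * |κ| * |x - y| := by ring
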